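/- Fix an integer m and a real number α ∈ (1/2, 2/3). For an integer N ≥ 6 let I₄ := {(j,l) : 1 ≤ j < N/2, j ≡ N−1 (mod 2), 0 ≤ l < j, (j − N/2)² + (l − N/3)² ≤ N^{2α}}. Then there exists a constant c > 0 such that for all integers N ≥ 6, | ∑_{(j,l) ∈ I₄} exp(πi m j²/(4N)) · ( (m/2)(j − N/2) + (v^j + v^{−j})/{j} + 2{2j}·∑_{k=1}^l 1/A(j,k) ) · S(j−l, j+l) | ≤ c · N^{3α} · F(⌊N/2⌋, ⌊N/3⌋). -/

import Mathlib

open Complex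

/-- `v = exp(πi/N)`. -/
noncomputable def vN (N : ℕ) : ℂ := Complex.exp (Real.pi * Complex.I / N)

/-- `{n} = v^n - v^{-n}` at `v = exp(πi/N)`. -/
noncomputable def br (N : ℕ) (n : ℤ) : ℂ := vN N ^ n - vN N ^ (-n)

/-- `A(j,k) = {j-k}{j+k}`. -/
noncomputable def AA (N : ℕ) (j k : ℤ) : ℂ := br N (j - k) * br N (j + k)

/-- `S(k,l) = ∏_{k ≤ r ≤ l} {r}`. -/
noncomputable def SS (N : ℕ) (k l : ℤ) : ℂ := ∏ r ∈ Finset.Icc k l, br N r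

/-- `F(j,l) = (∏_{r=1}^{l+j} 2 sin(rπ/N)) / (∏_{r=1}^{j-l-1} 2 sin(rπ/N))`. -/
noncomputable def FF (N j l : ℕ) : ℝ :=
  (∏ r ∈ Finset.Icc 1 (l + j), 2 * Real.sin (r * Real.pi / N)) /
    ∏ r ∈ Finset.Icc 1 (j - l - 1), 2 * Real.sin (r * Real.pi / N)

/-- `D₁(j,l) = (mj/2 + (v^j+v^{-j})/{j} + 2{2j}∑_{k=1}^l 1/A(j,k))·S(j-l,j+l)`. -/
noncomputable def D1 (N : ℕ) (m : ℤ) (j l : ℕ) : ℂ :=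
  ((m : ℂ) * (j : ℂ) / 2 + (vN N ^ (j : ℤ) + vN N ^ (-(j : ℤ))) / br N (j : ℤ) +
      2 * br N (2 * (j : ℤ)) * ∑ k ∈ Finset.Icc 1 l, 1 / AA N (j : ℤ) (k : ℤ)) *
    SS N ((j : ℤ) - (l : ℤ)) ((j : ℤ) + (l : ℤ))

open scoped Classical

open Real

lemma vN_zpow (N : ℕ) (n : ℤ) : vN N ^ n = Complex.exp ((n * Real.pi / N : ℝ) * Complex.I) := by
  have h : vN N = Complex.exp ((Real.pi / N : ℝ) * Complex.I) := by
    unfold vN; congr 1; push_cast; ring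
  rw [h, ← Complex.exp_int_mul]
  congr 1; push_cast; ring

lemma br_eq (N : ℕ) (n : ℤ) :
    br N n = 2 * Real.sin (n * Real.pi / N) * Complex.I := by
  rw [br, vN_zpow, vN_zpow,
    show ((-n : ℤ) * Real.pi / N : ℝ) = -(n * Real.pi / N) by push_cast; ring,
    Complex.ofReal_neg, Complex.exp_mul_I, Complex.exp_mul_I]
  simp only [Complex.sin_neg, Complex.cos_neg, ← Complex.ofReal_sin, ← Complex.ofReal_cos]
  ring

lemma abs_br (N : ℕ) (n : ℤ) :
    ‖br N n‖ = 2 * |Real.sin (n * Real.pi / N)| := by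
  rw [br_eq]
  simp only [norm_mul, Complex.norm_real, Real.norm_eq_abs, Complex.norm_I, Complex.norm_two]
  ring

lemma Icc_int_eq_map (a b : ℕ) :
    Finset.Icc (a : ℤ) (b : ℤ) = (Finset.Icc a b).map Nat.castEmbedding := by
  ext x
  simp only [Finset.mem_map, Finset.mem_Icc, Nat.castEmbedding_apply]
  constructor
  · intro hx; exact ⟨x.toNat, by omega, by omega⟩
  · rintro ⟨y, hy, rfl⟩; exact_mod_cast hy

lemma prod_Icc_cast (g : ℤ → ℝ) (a b : ℕ) :
    ∏ r ∈ Finset.Icc (a : ℤ) (b : ℤ), g r = ∏ r ∈ Finset.Icc a b, g ↑r := by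
  rw [Icc_int_eq_map, Finset.prod_map]
  rfl

open Real

lemma sin_posN (N : ℕ) {r : ℝ} (h1 : 0 < r) (h2 : r < N) : 0 < Real.sin (r * π / N) := by
  have hN : (0:ℝ) < N := lt_trans h1 h2
  apply Real.sin_pos_of_pos_of_lt_pi
  · positivity
  · rw [div_lt_iff₀ hN]
    have := Real.pi_pos
    nlinarith

lemma sin_lbN (N : ℕ) (hN : 0 < N) {r : ℝ} (h0 : 0 ≤ r) (h2 : 2 * r ≤ N) :
    2 * r / N ≤ Real.sin (r * π / N) := by
  have hN' : (0:ℝ) < N := by exact_mod_cast hN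
  have hπ := Real.pi_pos
  have := Real.mul_le_sin (x := r * π / N) (by positivity)
    (by rw [div_le_div_iff₀ hN' two_pos]; nlinarith)
  calc 2 * r / N = 2 / π * (r * π / N) := by field_simp
    _ ≤ _ := this

lemma sin_sixth (N : ℕ) (hN : 0 < N) {r : ℝ} (h1 : (N:ℝ)/12 ≤ r) (h2 : r ≤ 11 * N / 12) :
    1/6 ≤ Real.sin (r * π / N) := by
  have hN' : (0:ℝ) < N := by exact_mod_cast hN
  rcases le_or_gt (2*r) (N:ℝ) with h | h
  · calc (1:ℝ)/6 ≤ 2 * r / N := by rw [le_div_iff₀ hN']; linarith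
      _ ≤ _ := sin_lbN N hN (by linarith) h
  · have hrefl : Real.sin (r * π / N) = Real.sin ((N - r) * π / N) := by
      rw [← Real.sin_pi_sub]
      congr 1
      field_simp
    rw [hrefl]
    calc (1:ℝ)/6 ≤ 2 * (N - r) / N := by rw [le_div_iff₀ hN']; linarith
      _ ≤ _ := sin_lbN N hN (by linarith) (by linarith)

lemma sin_two_div (N : ℕ) {r : ℤ} (h1 : 1 ≤ r) (h2 : r ≤ (N:ℤ) - 1) :
    2 / (N:ℝ) ≤ Real.sin (r * π / N) := by
  have hN : 0 < N := by omega
  have hr1 : (1:ℝ) ≤ (r:ℝ) := by exact_mod_cast h1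
  have hr2 : (r:ℝ) ≤ (N:ℝ) - 1 := by exact_mod_cast h2
  have hN' : (0:ℝ) < N := by exact_mod_cast hN
  rcases le_or_gt (2*(r:ℝ)) (N:ℝ) with h | h
  · calc 2/(N:ℝ) ≤ 2 * r / N := by rw [div_le_div_iff₀ hN' hN']; nlinarith
      _ ≤ _ := sin_lbN N hN (by linarith) h
  · have hrefl : Real.sin (r * π / N) = Real.sin ((N - r) * π / N) := by
      rw [← Real.sin_pi_sub]; congr 1; field_simp
    rw [hrefl]
    calc 2/(N:ℝ) ≤ 2 * ((N:ℝ) - r) / N := by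
          rw [div_le_div_iff₀ hN' hN']; nlinarith
      _ ≤ _ := sin_lbN N hN (by linarith) (by linarith)

lemma sin_ub_refl (N : ℕ) {r : ℝ} (h2 : r ≤ N) :
    Real.sin (r * π / N) ≤ (N - r) * π / N := by
  rcases Nat.eq_zero_or_pos N with rfl | hN
  · simp
  have hN' : (0:ℝ) < N := by exact_mod_cast hN
  have hrefl : Real.sin (r * π / N) = Real.sin ((N - r) * π / N) := by
    rw [← Real.sin_pi_sub]; congr 1; field_simp
  rw [hrefl]
  have h0 : (0:ℝ) ≤ (N:ℝ) - r := by linarith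
  apply Real.sin_le
  positivity

lemma of_one_le_2sin (N : ℕ) {r : ℤ} (h1 : 1 ≤ r) (h2 : r ≤ (N:ℤ) - 1)
    (h : 1 ≤ 2 * Real.sin (r * π / N)) : (N:ℤ) ≤ 6 * r ∧ 6 * r ≤ 5 * N := by
  have hN : 0 < N := by omega
  have hN' : (0:ℝ) < N := by exact_mod_cast hN
  have hr1 : (1:ℝ) ≤ (r:ℝ) := by exact_mod_cast h1
  have hr2 : (r:ℝ) ≤ (N:ℝ) - 1 := by exact_mod_cast h2
  have hπ := Real.pi_pos
  set θ := (r:ℝ) * π / N with hθ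
  have hθ0 : 0 < θ := by positivity
  have hθπ : θ < π := by rw [hθ, div_lt_iff₀ hN']; nlinarith
  have hsin : 1/2 ≤ Real.sin θ := by linarith
  constructor
  · -- N ≤ 6r from π/6 ≤ θ
    by_contra hcon
    have h6 : 6 * (r:ℝ) < N := by exact_mod_cast (by omega : 6*r < (N:ℤ))
    have hθ6 : θ < π / 6 := by rw [hθ, div_lt_div_iff₀ hN' (by norm_num : (0:ℝ) < 6)]; nlinarith
    have := Real.strictMonoOn_sin (Set.mem_Icc.2 ⟨by linarith, by linarith⟩)
      (Set.mem_Icc.2 ⟨by linarith, by linarith⟩) hθ6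
    rw [Real.sin_pi_div_six] at this
    linarith
  · by_contra hcon
    have h6 : 5 * (N:ℝ) < 6 * r := by exact_mod_cast (by omega : 5*(N:ℤ) < 6*r)
    have hθlb : 5 * π / 6 < θ := by
      rw [hθ, div_lt_div_iff₀ (by norm_num : (0:ℝ) < 6) hN']; nlinarith
    have hθ6 : π - θ < π / 6 := by linarith
    have hs : Real.sin θ = Real.sin (π - θ) := (Real.sin_pi_sub θ).symm
    have := Real.strictMonoOn_sin (Set.mem_Icc.2 ⟨by linarith, by linarith⟩)
      (Set.mem_Icc.2 ⟨by linarith, by linarith⟩) hθ6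
    rw [Real.sin_pi_div_six] at this
    linarith

lemma sin_half_aux {t : ℝ} (h1 : π/6 ≤ t) (h2 : t ≤ π/2) : 1/2 ≤ Real.sin t := by
  have hπ := Real.pi_pos
  rw [← Real.sin_pi_div_six]
  exact Real.strictMonoOn_sin.monotoneOn
    (Set.mem_Icc.2 ⟨by linarith, by linarith⟩)
    (Set.mem_Icc.2 ⟨by linarith, h2⟩) h1

lemma sin_half_ge (N : ℕ) {r : ℤ} (hN : 0 < N) (h1 : (N:ℤ) ≤ 6*r) (h2 : 6*r ≤ 5*N) :
    1/2 ≤ Real.sin ((r:ℝ) * π / N) := by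
  have hN' : (0:ℝ) < N := by exact_mod_cast hN
  have hπ := Real.pi_pos
  have hr1 : (N:ℝ) ≤ 6*(r:ℝ) := by exact_mod_cast h1
  have hr2 : 6*(r:ℝ) ≤ 5*(N:ℝ) := by exact_mod_cast h2
  rcases le_or_gt (2*(r:ℝ)) N with h | h
  · apply sin_half_aux
    · rw [div_le_div_iff₀ (by norm_num : (0:ℝ) < 6) hN']; nlinarith
    · rw [div_le_div_iff₀ hN' (by norm_num : (0:ℝ) < 2)]; nlinarith
  · have hrefl : Real.sin ((r:ℝ) * π / N) = Real.sin (((N:ℝ) - r) * π / N) := by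
      rw [← Real.sin_pi_sub]; congr 1; field_simp
    rw [hrefl]
    apply sin_half_aux
    · rw [div_le_div_iff₀ (by norm_num : (0:ℝ) < 6) hN']; nlinarith
    · rw [div_le_div_iff₀ hN' (by norm_num : (0:ℝ) < 2)]; nlinarith

lemma prod_max (N : ℕ) (hN : 6 ≤ N) {a b A B : ℤ}
    (ha : 1 ≤ a) (hb : b ≤ (N:ℤ) - 1)
    (hA1 : 1 ≤ A) (hAB : A ≤ B) (hB : B ≤ (N:ℤ) - 1)
    (h6A_ub : 6*A ≤ (N:ℤ) + 5) (h6A_lb : (N:ℤ) ≤ 6*A + 3)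
    (h12A : (N:ℤ) ≤ 12*A)
    (h6B_ub : 6*B ≤ 5*(N:ℤ)) (h6B_lb : 5*(N:ℤ) ≤ 6*B + 7) :
    ∏ r ∈ Finset.Icc a b, (2 * Real.sin ((r:ℝ) * π / N)) ≤
      6 * ∏ r ∈ Finset.Icc A B, (2 * Real.sin ((r:ℝ) * π / N)) := by
  have hN0 : 0 < N := by omega
  have hN' : (0:ℝ) < N := by exact_mod_cast hN0
  set x : ℤ → ℝ := fun r => 2 * Real.sin ((r:ℝ) * π / N) with hxdef
  have hxpos : ∀ r : ℤ, 1 ≤ r → r ≤ (N:ℤ) - 1 → 0 < x r := by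
    intro r h1 h2
    have : 0 < Real.sin ((r:ℝ) * π / N) := by
      apply sin_posN
      · exact_mod_cast lt_of_lt_of_le one_pos (by exact_mod_cast h1)
      · have : (r:ℝ) ≤ (N:ℝ) - 1 := by exact_mod_cast h2
        linarith
    simp only [hxdef]; linarith
  have hxle2 : ∀ r : ℤ, x r ≤ 2 := by
    intro r; simp only [hxdef]
    have := Real.sin_le_one ((r:ℝ) * π / N); linarith
  -- T : the set of all r in [1, N-1] with x r ≥ 1
  set T : Finset ℤ := (Finset.Icc (1:ℤ) ((N:ℤ)-1)).filter (fun r => 1 ≤ x r) with hTdef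
  have hT_mem : ∀ r ∈ T, A ≤ r ∧ r ≤ B + 1 ∧ 1 ≤ x r := by
    intro r hr
    rw [hTdef, Finset.mem_filter, Finset.mem_Icc] at hr
    obtain ⟨⟨hr1, hr2⟩, hx1⟩ := hr
    obtain ⟨hl, hu⟩ := of_one_le_2sin N hr1 hr2 hx1
    exact ⟨by omega, by omega, hx1⟩
  -- Step 1 : restrict to the factors ≥ 1
  have step1 : ∏ r ∈ Finset.Icc a b, x r ≤
      ∏ r ∈ (Finset.Icc a b).filter (fun r => 1 ≤ x r), x r := by
    rw [← Finset.prod_filter_mul_prod_filter_not (Finset.Icc a b) (fun r => 1 ≤ x r) x]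
    have h1 : ∏ r ∈ (Finset.Icc a b).filter (fun r => ¬ 1 ≤ x r), x r ≤ 1 := by
      apply Finset.prod_le_one
      · intro r hr
        rw [Finset.mem_filter, Finset.mem_Icc] at hr
        exact le_of_lt (hxpos r (by omega) (by omega))
      · intro r hr
        rw [Finset.mem_filter] at hr
        linarith [hr.2]
    have h2 : 0 ≤ ∏ r ∈ (Finset.Icc a b).filter (fun r => 1 ≤ x r), x r := by
      apply Finset.prod_nonneg
      intro r hr
      rw [Finset.mem_filter] at hr
      linarith [hr.2]
    nlinarith
  -- Step 2 : extend to T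
  have hsub : (Finset.Icc a b).filter (fun r => 1 ≤ x r) ⊆ T := by
    intro r hr
    rw [Finset.mem_filter, Finset.mem_Icc] at hr
    rw [hTdef, Finset.mem_filter, Finset.mem_Icc]
    exact ⟨⟨by omega, by omega⟩, hr.2⟩
  have step2 : ∏ r ∈ (Finset.Icc a b).filter (fun r => 1 ≤ x r), x r ≤ ∏ r ∈ T, x r := by
    rw [← Finset.prod_sdiff hsub]
    have h1 : (1:ℝ) ≤ ∏ r ∈ T \ (Finset.Icc a b).filter (fun r => 1 ≤ x r), x r := by
      calc (1:ℝ) = ∏ _r ∈ T \ (Finset.Icc a b).filter (fun r => 1 ≤ x r), (1:ℝ) := by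
            rw [Finset.prod_const_one]
        _ ≤ _ := by
            apply Finset.prod_le_prod
            · intros; norm_num
            · intro r hr
              exact (hT_mem r (Finset.mem_sdiff.mp hr).1).2.2
    have h2 : 0 ≤ ∏ r ∈ (Finset.Icc a b).filter (fun r => 1 ≤ x r), x r := by
      apply Finset.prod_nonneg
      intro r hr; rw [Finset.mem_filter] at hr; linarith [hr.2]
    nlinarith
  -- Step 3 : compare T with Icc A B
  have hsplit := Finset.prod_filter_mul_prod_filter_not T (fun r => r ≤ B) x
  have hTB : T.filter (fun r => ¬ r ≤ B) ⊆ {B + 1} := by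
    intro r hr
    rw [Finset.mem_filter] at hr
    have := hT_mem r hr.1
    have : r = B + 1 := by omega
    simp [this]
  have hprodTB : ∏ r ∈ T.filter (fun r => ¬ r ≤ B), x r ≤ 2 := by
    rcases Finset.subset_singleton_iff.mp hTB with h | h <;> rw [h]
    · norm_num
    · rw [Finset.prod_singleton]; exact hxle2 _
  have hTeq : T.filter (fun r => r ≤ B) = (Finset.Icc A B).filter (fun r => 1 ≤ x r) := by
    ext r
    simp only [hTdef, Finset.mem_filter, Finset.mem_Icc]
    constructor
    · rintro ⟨⟨⟨hr1, hr2⟩, hx1⟩, hrB⟩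
      have h := of_one_le_2sin N hr1 hr2 hx1
      exact ⟨⟨by omega, hrB⟩, hx1⟩
    · rintro ⟨⟨h1, h2⟩, h3⟩
      exact ⟨⟨⟨by omega, by omega⟩, h3⟩, h2⟩
  -- Step 4 : the complement of the filtered part inside Icc A B is at most {A}
  have hABsplit := Finset.prod_filter_mul_prod_filter_not (Finset.Icc A B) (fun r => 1 ≤ x r) x
  have hABnot : (Finset.Icc A B).filter (fun r => ¬ 1 ≤ x r) ⊆ {A} := by
    intro r hr
    rw [Finset.mem_filter, Finset.mem_Icc] at hr
    obtain ⟨⟨h1, h2⟩, h3⟩ := hr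
    by_contra hne
    have hrA : A + 1 ≤ r := by
      rcases lt_or_eq_of_le h1 with h | h
      · omega
      · exfalso; apply hne; simp [h.symm]
    have : (1:ℝ)/2 ≤ Real.sin ((r:ℝ) * π / N) :=
      sin_half_ge N hN0 (by omega) (by omega)
    apply h3
    simp only [hxdef]; linarith
  have hxA : (1:ℝ)/3 ≤ x A := by
    simp only [hxdef]
    have hA2 : 2 * (A:ℝ) ≤ N := by exact_mod_cast (by omega : 2*A ≤ (N:ℤ))
    have hA0 : (0:ℝ) ≤ (A:ℝ) := by exact_mod_cast (by omega : (0:ℤ) ≤ A)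
    have h1 := sin_lbN N hN0 hA0 hA2
    have h2 : (1:ℝ)/6 ≤ 2 * (A:ℝ) / N := by
      rw [le_div_iff₀ hN']
      have : (N:ℝ) ≤ 12 * (A:ℝ) := by exact_mod_cast h12A
      linarith
    linarith
  have hprodABnot : (1:ℝ)/3 ≤ ∏ r ∈ (Finset.Icc A B).filter (fun r => ¬ 1 ≤ x r), x r := by
    rcases Finset.subset_singleton_iff.mp hABnot with h | h <;> rw [h]
    · norm_num
    · rw [Finset.prod_singleton]; exact hxA
  -- assemble
  have hfil_nonneg : 0 ≤ ∏ r ∈ (Finset.Icc A B).filter (fun r => 1 ≤ x r), x r := by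
    apply Finset.prod_nonneg
    intro r hr; rw [Finset.mem_filter] at hr; linarith [hr.2]
  have hT_le : ∏ r ∈ T, x r ≤ 2 * ∏ r ∈ (Finset.Icc A B).filter (fun r => 1 ≤ x r), x r := by
    rw [← hsplit, hTeq]
    nlinarith [hprodTB, hfil_nonneg]
  have hAB_ge : ∏ r ∈ (Finset.Icc A B).filter (fun r => 1 ≤ x r), x r ≤
      3 * ∏ r ∈ Finset.Icc A B, x r := by
    rw [← hABsplit]
    nlinarith [hprodABnot, hfil_nonneg]
  calc ∏ r ∈ Finset.Icc a b, x r ≤ ∏ r ∈ (Finset.Icc a b).filter (fun r => 1 ≤ x r), x r := step1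
    _ ≤ ∏ r ∈ T, x r := step2
    _ ≤ 2 * ∏ r ∈ (Finset.Icc A B).filter (fun r => 1 ≤ x r), x r := hT_le
    _ ≤ 2 * (3 * ∏ r ∈ Finset.Icc A B, x r) := by linarith [hAB_ge]
    _ = 6 * ∏ r ∈ Finset.Icc A B, x r := by ring

lemma FF_eq (N : ℕ) (hN : 6 ≤ N) :
    FF N (N/2) (N/3) =
      ∏ r ∈ Finset.Icc (((N/2 - N/3 : ℕ)) : ℤ) (((N/2 + N/3 : ℕ)) : ℤ),
        (2 * Real.sin ((r:ℝ) * π / N)) := by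
  have hcast : ∏ r ∈ Finset.Icc (((N/2 - N/3 : ℕ)) : ℤ) (((N/2 + N/3 : ℕ)) : ℤ),
      (2 * Real.sin ((r:ℝ) * π / N)) =
      ∏ r ∈ Finset.Icc (N/2 - N/3) (N/2 + N/3), (2 * Real.sin ((r:ℕ) * π / N)) := by
    rw [prod_Icc_cast (fun r : ℤ => 2 * Real.sin ((r:ℝ) * π / N))]
    apply Finset.prod_congr rfl
    intro r _
    norm_num
  rw [hcast, FF]
  have h1 : N/3 + N/2 = N/2 + N/3 := Nat.add_comm _ _
  have h2 : N/2 - N/3 - 1 = (N/2 - N/3) - 1 := rfl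
  have hA1 : 1 ≤ N/2 - N/3 := by omega
  have hle : N/2 - N/3 - 1 ≤ N/2 + N/3 := by omega
  have hsplit : (∏ r ∈ Finset.Icc 1 (N/2 - N/3 - 1), (2 * Real.sin ((r:ℕ) * π / N))) *
      (∏ r ∈ Finset.Icc (N/2 - N/3) (N/2 + N/3), (2 * Real.sin ((r:ℕ) * π / N))) =
      ∏ r ∈ Finset.Icc 1 (N/3 + N/2), (2 * Real.sin ((r:ℕ) * π / N)) := by
    rw [show N/3 + N/2 = N/2 + N/3 by omega]
    rw [show Finset.Icc 1 (N/2 - N/3 - 1) = Finset.Ioc 0 (N/2 - N/3 - 1) from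
        Finset.Icc_add_one_left_eq_Ioc 0 _,
      show Finset.Icc (N/2 - N/3) (N/2 + N/3) =
        Finset.Ioc (N/2 - N/3 - 1) (N/2 + N/3) by
        rw [← Finset.Icc_add_one_left_eq_Ioc]; congr 1; omega,
      show Finset.Icc 1 (N/2 + N/3) = Finset.Ioc 0 (N/2 + N/3) from Finset.Icc_add_one_left_eq_Ioc 0 _]
    exact Finset.prod_Ioc_consecutive _ (by omega) (by omega)
  have hden : 0 < ∏ r ∈ Finset.Icc 1 (N/2 - N/3 - 1), (2 * Real.sin ((r:ℕ) * π / N)) := by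
    apply Finset.prod_pos
    intro r hr
    rw [Finset.mem_Icc] at hr
    have : 0 < Real.sin ((r:ℕ) * π / N) := by
      apply sin_posN
      · exact_mod_cast Nat.lt_of_lt_of_le Nat.zero_lt_one hr.1
      · exact_mod_cast (by omega : r < N)
    linarith
  rw [div_eq_iff hden.ne', ← hsplit]
  ring

lemma abs_SS (N : ℕ) {a b : ℤ} (ha : 1 ≤ a) (hb : b ≤ (N:ℤ) - 1) :
    ‖SS N a b‖ = ∏ r ∈ Finset.Icc a b, (2 * Real.sin ((r:ℝ) * π / N)) := by
  rw [SS, norm_prod]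
  apply Finset.prod_congr rfl
  intro r hr
  rw [Finset.mem_Icc] at hr
  rw [abs_br]
  congr 1
  apply abs_of_pos
  apply sin_posN
  · exact_mod_cast lt_of_lt_of_le one_pos (by exact_mod_cast le_trans ha hr.1)
  · have h2 : r < (N:ℤ) := by have := le_trans hr.2 hb; omega
    exact_mod_cast h2

lemma FF_pos (N : ℕ) (hN : 6 ≤ N) : 0 < FF N (N/2) (N/3) := by
  rw [FF_eq N hN]
  apply Finset.prod_pos
  intro r hr
  rw [Finset.mem_Icc] at hr
  have h1 : (1:ℤ) ≤ r := le_trans (by omega) hr.1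
  have h2 : r ≤ (N:ℤ) - 1 := le_trans hr.2 (by omega)
  have : 0 < Real.sin ((r:ℝ) * π / N) := by
    apply sin_posN
    · exact_mod_cast lt_of_lt_of_le one_pos (by exact_mod_cast h1)
    · exact_mod_cast (by omega : r < (N:ℤ))
  linarith

lemma SS_bound (N : ℕ) (hN : 6 ≤ N) {a b : ℤ} (ha : 1 ≤ a) (hb : b ≤ (N:ℤ) - 1) :
    ‖SS N a b‖ ≤ 6 * FF N (N/2) (N/3) := by
  rw [abs_SS N ha hb, FF_eq N hN]
  exact prod_max N hN ha hb (by omega) (by omega) (by omega) (by omega) (by omega)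
    (by omega) (by omega) (by omega)
lemma abs_vN_zpow (N : ℕ) (n : ℤ) : ‖vN N ^ n‖ = 1 := by
  rw [vN_zpow]; exact Complex.norm_exp_ofReal_mul_I _

lemma absAA_good (N : ℕ) (hN : 0 < N) {j k : ℤ}
    (h1 : (N:ℝ)/12 ≤ ((j - k : ℤ) : ℝ)) (h2 : ((j - k : ℤ) : ℝ) ≤ 11*N/12)
    (h3 : (N:ℝ)/12 ≤ ((j + k : ℤ) : ℝ)) (h4 : ((j + k : ℤ) : ℝ) ≤ 11*N/12) :
    1/9 ≤ ‖AA N j k‖ := by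
  rw [AA, norm_mul, abs_br, abs_br]
  have s1 := sin_sixth N hN h1 h2
  have s2 := sin_sixth N hN h3 h4
  have a1 := le_trans s1 (le_abs_self _)
  have a2 := le_trans s2 (le_abs_self _)
  nlinarith

lemma absAA_crude (N : ℕ) {j k : ℤ} (h1 : 1 ≤ j - k) (h2 : j + k ≤ (N:ℤ) - 1)
    (hk : 0 ≤ k) : 16/(N:ℝ)^2 ≤ ‖AA N j k‖ := by
  have hN : 0 < N := by omega
  have hN' : (0:ℝ) < N := by exact_mod_cast hN
  rw [AA, norm_mul, abs_br, abs_br]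
  have s1 := sin_two_div N h1 (by omega)
  have s2 := sin_two_div N (by omega : 1 ≤ j + k) h2
  have a1 := le_trans s1 (le_abs_self _)
  have a2 := le_trans s2 (le_abs_self _)
  have h2N : (0:ℝ) < 2/(N:ℝ) := by positivity
  calc 16/(N:ℝ)^2 = (2*(2/(N:ℝ))) * (2*(2/(N:ℝ))) := by field_simp; ring
    _ ≤ _ := by
      apply mul_le_mul (by linarith) (by linarith) (by linarith) ?_
      have := abs_nonneg (Real.sin (((j - k : ℤ):ℝ) * π / N))
      linarith

set_option maxHeartbeats 1000000 in
lemma M_bound_main (N : ℕ) (m : ℤ) (j l : ℕ) {t : ℝ}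
    (hN : 6 ≤ N) (hj2 : 2*j < N) (hl : l < j)
    (ht1 : 1 ≤ t) (ht : 24 * t ≤ N)
    (hjr : |(j:ℝ) - N/2| ≤ t) (hlr : |(l:ℝ) - N/3| ≤ t) :
    ‖(m:ℂ)/2 * ((j:ℂ) - (N:ℂ)/2) +
        (vN N ^ (j:ℤ) + vN N ^ (-(j:ℤ))) / br N (j:ℤ) +
        2 * br N (2*(j:ℤ)) * ∑ k ∈ Finset.Icc 1 l, 1 / AA N (j:ℤ) (k:ℤ)‖ ≤
      (|(m:ℝ)| + 146) * t := by
  have hN0 : 0 < N := by omega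
  have hN' : (0:ℝ) < N := by exact_mod_cast hN0
  have hπ := Real.pi_pos
  have hπ4 := Real.pi_le_four
  obtain ⟨hj_lb, hj_ub⟩ := abs_le.mp hjr
  obtain ⟨hl_lb, hl_ub⟩ := abs_le.mp hlr
  have hjN : 2*(j:ℝ) ≤ (N:ℝ) - 1 := by exact_mod_cast (by omega : (2*j:ℤ) ≤ (N:ℤ) - 1)
  have hlj : (l:ℝ) ≤ (j:ℝ) - 1 := by exact_mod_cast (by omega : (l:ℤ) ≤ (j:ℤ) - 1)
  have ht0 : 0 < t := lt_of_lt_of_le one_pos ht1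
  have P1 : ‖(m:ℂ)/2 * ((j:ℂ) - (N:ℂ)/2)‖ ≤ |(m:ℝ)|/2 * t := by
    rw [norm_mul, norm_div, Complex.norm_intCast, Complex.norm_two,
      show ((j:ℂ) - (N:ℂ)/2) = (((j:ℝ) - (N:ℝ)/2 : ℝ) : ℂ) by push_cast; ring,
      Complex.norm_real, Real.norm_eq_abs]
    exact mul_le_mul_of_nonneg_left hjr (by positivity)
  have P2 : ‖(vN N ^ (j:ℤ) + vN N ^ (-(j:ℤ))) / br N (j:ℤ)‖ ≤ 2 := by
    rw [norm_div]
    have hnum : ‖vN N ^ (j:ℤ) + vN N ^ (-(j:ℤ))‖ ≤ 2 := by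
      refine le_trans (norm_add_le _ _) ?_
      rw [abs_vN_zpow, abs_vN_zpow]; norm_num
    have hsin : (11:ℝ)/12 ≤ Real.sin ((((j:ℕ):ℤ):ℝ) * π / N) := by
      have hb := sin_lbN N hN0 (r := (j:ℝ)) (by positivity) (by linarith)
      have h11 : (11:ℝ)/12 ≤ 2*(j:ℝ)/N := by
        rw [div_le_div_iff₀ (by norm_num) hN']
        nlinarith
      push_cast
      linarith
    have hden : 1 ≤ ‖br N (j:ℤ)‖ := by
      rw [abs_br]
      have := le_trans hsin (le_abs_self _)
      linarith
    calc ‖vN N ^ (j:ℤ) + vN N ^ (-(j:ℤ))‖ / ‖br N (j:ℤ)‖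
        ≤ 2 / 1 := div_le_div₀ (by norm_num) hnum one_pos hden
      _ = 2 := by norm_num
  have P3 : ‖2 * br N (2*(j:ℤ)) * ∑ k ∈ Finset.Icc 1 l, 1 / AA N (j:ℤ) (k:ℤ)‖ ≤
      144 * t := by
    rw [norm_mul, norm_mul, Complex.norm_two]
    have hbr : ‖br N (2*(j:ℤ))‖ ≤ 2*((2*t)*π/N) := by
      rw [abs_br]
      have harg : ((2*(j:ℤ) : ℤ):ℝ) = 2*(j:ℝ) := by push_cast; ring
      rw [harg]
      have h0 : 0 ≤ Real.sin (2*(j:ℝ) * π / N) := by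
        apply Real.sin_nonneg_of_nonneg_of_le_pi
        · positivity
        · rw [div_le_iff₀ hN']; nlinarith
      rw [_root_.abs_of_nonneg h0]
      have hub := sin_ub_refl N (r := 2*(j:ℝ)) (by linarith)
      have hNt : (N:ℝ) - 2*(j:ℝ) ≤ 2*t := by linarith
      calc 2 * Real.sin (2*(j:ℝ) * π / N) ≤ 2 * (((N:ℝ) - 2*(j:ℝ)) * π / N) := by linarith
        _ ≤ 2 * ((2*t) * π / N) := by gcongr
    have hsum : ‖∑ k ∈ Finset.Icc 1 l, 1 / AA N (j:ℤ) (k:ℤ)‖ ≤ (l:ℝ) * 9 := by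
      refine le_trans (norm_sum_le _ _) ?_
      have hterm : ∀ k ∈ Finset.Icc 1 l, ‖1 / AA N (j:ℤ) (k:ℤ)‖ ≤ 9 := by
        intro k hk
        rw [Finset.mem_Icc] at hk
        have hk1 : (1:ℝ) ≤ (k:ℝ) := by exact_mod_cast hk.1
        have hk2 : (k:ℝ) ≤ (l:ℝ) := by exact_mod_cast hk.2
        rw [norm_div, norm_one]
        have hAA : 1/9 ≤ ‖AA N (j:ℤ) (k:ℤ)‖ := by
          refine absAA_good N hN0 ?_ ?_ ?_ ?_ <;> push_cast <;> linarith
        rw [div_le_iff₀ (lt_of_lt_of_le (by norm_num) hAA)]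
        linarith
      calc ∑ k ∈ Finset.Icc 1 l, ‖1 / AA N (j:ℤ) (k:ℤ)‖
          ≤ (Finset.Icc 1 l).card • (9:ℝ) := Finset.sum_le_card_nsmul _ _ _ hterm
        _ = ((Finset.Icc 1 l).card : ℝ) * 9 := nsmul_eq_mul _ _
        _ ≤ (l:ℝ) * 9 := by
            rw [Nat.card_Icc]
            gcongr
            exact_mod_cast (by omega : l + 1 - 1 ≤ l)
    have hlN : (l:ℝ) ≤ (N:ℝ)/2 := by linarith
    calc (2:ℝ) * ‖br N (2*(j:ℤ))‖ *
          ‖∑ k ∈ Finset.Icc 1 l, 1 / AA N (j:ℤ) (k:ℤ)‖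
        ≤ 2 * (2*((2*t)*π/N)) * ((l:ℝ)*9) := by
          apply mul_le_mul (by linarith) hsum (norm_nonneg _) (by positivity)
      _ ≤ 2 * (2*((2*t)*π/N)) * (((N:ℝ)/2)*9) := by gcongr
      _ = 36 * π * t := by field_simp; ring
      _ ≤ 144 * t := by nlinarith
  calc ‖(m:ℂ)/2 * ((j:ℂ) - (N:ℂ)/2) +
        (vN N ^ (j:ℤ) + vN N ^ (-(j:ℤ))) / br N (j:ℤ) +
        2 * br N (2*(j:ℤ)) * ∑ k ∈ Finset.Icc 1 l, 1 / AA N (j:ℤ) (k:ℤ)‖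
      ≤ ‖(m:ℂ)/2 * ((j:ℂ) - (N:ℂ)/2) +
          (vN N ^ (j:ℤ) + vN N ^ (-(j:ℤ))) / br N (j:ℤ)‖ +
        ‖2 * br N (2*(j:ℤ)) * ∑ k ∈ Finset.Icc 1 l, 1 / AA N (j:ℤ) (k:ℤ)‖ :=
        norm_add_le _ _
    _ ≤ ‖(m:ℂ)/2 * ((j:ℂ) - (N:ℂ)/2)‖ +
        ‖(vN N ^ (j:ℤ) + vN N ^ (-(j:ℤ))) / br N (j:ℤ)‖ +
        ‖2 * br N (2*(j:ℤ)) * ∑ k ∈ Finset.Icc 1 l, 1 / AA N (j:ℤ) (k:ℤ)‖ := by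
        have := norm_add_le ((m:ℂ)/2 * ((j:ℂ) - (N:ℂ)/2))
          ((vN N ^ (j:ℤ) + vN N ^ (-(j:ℤ))) / br N (j:ℤ))
        linarith
    _ ≤ |(m:ℝ)|/2 * t + 2 + 144 * t := by linarith
    _ ≤ (|(m:ℝ)| + 146) * t := by
        have h2t : (2:ℝ) ≤ 2 * t := by linarith
        have hmt : 0 ≤ |(m:ℝ)| * t := mul_nonneg (abs_nonneg _) ht0.le
        nlinarith

lemma M_bound_crude (N : ℕ) (m : ℤ) (j l : ℕ)
    (hN : 6 ≤ N) (hj1 : 1 ≤ j) (hj2 : 2*j < N) (hl : l < j) :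
    ‖(m:ℂ)/2 * ((j:ℂ) - (N:ℂ)/2) +
        (vN N ^ (j:ℤ) + vN N ^ (-(j:ℤ))) / br N (j:ℤ) +
        2 * br N (2*(j:ℤ)) * ∑ k ∈ Finset.Icc 1 l, 1 / AA N (j:ℤ) (k:ℤ)‖ ≤
      (|(m:ℝ)| + 1) * (N:ℝ)^3 := by
  have hN0 : 0 < N := by omega
  have hN' : (0:ℝ) < N := by exact_mod_cast hN0
  have hN6 : (6:ℝ) ≤ N := by exact_mod_cast hN
  have hjN : 2*(j:ℝ) ≤ (N:ℝ) - 1 := by exact_mod_cast (by omega : (2*j:ℤ) ≤ (N:ℤ) - 1)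
  have hj1' : (1:ℝ) ≤ (j:ℝ) := by exact_mod_cast hj1
  have hlj : (l:ℝ) ≤ (j:ℝ) - 1 := by exact_mod_cast (by omega : (l:ℤ) ≤ (j:ℤ) - 1)
  have P1 : ‖(m:ℂ)/2 * ((j:ℂ) - (N:ℂ)/2)‖ ≤ |(m:ℝ)|/2 * N := by
    rw [norm_mul, norm_div, Complex.norm_intCast, Complex.norm_two,
      show ((j:ℂ) - (N:ℂ)/2) = (((j:ℝ) - (N:ℝ)/2 : ℝ) : ℂ) by push_cast; ring,
      Complex.norm_real, Real.norm_eq_abs]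
    apply mul_le_mul_of_nonneg_left ?_ (by positivity)
    rw [abs_le]
    constructor <;> linarith
  have P2 : ‖(vN N ^ (j:ℤ) + vN N ^ (-(j:ℤ))) / br N (j:ℤ)‖ ≤ (N:ℝ)/2 := by
    rw [norm_div]
    have hnum : ‖vN N ^ (j:ℤ) + vN N ^ (-(j:ℤ))‖ ≤ 2 := by
      refine le_trans (norm_add_le _ _) ?_
      rw [abs_vN_zpow, abs_vN_zpow]; norm_num
    have hsin := sin_two_div N (by exact_mod_cast hj1 : (1:ℤ) ≤ ((j:ℕ):ℤ))
      (by omega : ((j:ℕ):ℤ) ≤ (N:ℤ) - 1)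
    have hden : 4/(N:ℝ) ≤ ‖br N (j:ℤ)‖ := by
      rw [abs_br]
      have := le_trans hsin (le_abs_self _)
      linarith [show (4:ℝ)/(N:ℝ) = 2*(2/(N:ℝ)) from by ring]
    calc ‖vN N ^ (j:ℤ) + vN N ^ (-(j:ℤ))‖ / ‖br N (j:ℤ)‖
        ≤ 2 / (4/(N:ℝ)) := div_le_div₀ (by norm_num) hnum (by positivity) hden
      _ = (N:ℝ)/2 := by field_simp; ring
  have P3 : ‖2 * br N (2*(j:ℤ)) * ∑ k ∈ Finset.Icc 1 l, 1 / AA N (j:ℤ) (k:ℤ)‖ ≤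
      4 * ((l:ℝ) * ((N:ℝ)^2/16)) := by
    rw [norm_mul, norm_mul, Complex.norm_two]
    have hbr : ‖br N (2*(j:ℤ))‖ ≤ 2 := by
      rw [abs_br]
      have := abs_nonneg (Real.sin (((2*(j:ℤ) : ℤ):ℝ) * π / N))
      have := Real.abs_sin_le_one ((((2*(j:ℤ) : ℤ)):ℝ) * π / N)
      linarith
    have hsum : ‖∑ k ∈ Finset.Icc 1 l, 1 / AA N (j:ℤ) (k:ℤ)‖ ≤
        (l:ℝ) * ((N:ℝ)^2/16) := by
      refine le_trans (norm_sum_le _ _) ?_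
      have hterm : ∀ k ∈ Finset.Icc 1 l, ‖1 / AA N (j:ℤ) (k:ℤ)‖ ≤ (N:ℝ)^2/16 := by
        intro k hk
        rw [Finset.mem_Icc] at hk
        rw [norm_div, norm_one]
        have hAA : 16/(N:ℝ)^2 ≤ ‖AA N (j:ℤ) (k:ℤ)‖ :=
          absAA_crude N (by omega) (by omega) (by omega)
        have h16 : (0:ℝ) < 16/(N:ℝ)^2 := by positivity
        calc 1 / ‖AA N (j:ℤ) (k:ℤ)‖ ≤ 1 / (16/(N:ℝ)^2) :=
            one_div_le_one_div_of_le h16 hAA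
          _ = (N:ℝ)^2/16 := by field_simp
      calc ∑ k ∈ Finset.Icc 1 l, ‖1 / AA N (j:ℤ) (k:ℤ)‖
          ≤ (Finset.Icc 1 l).card • ((N:ℝ)^2/16) := Finset.sum_le_card_nsmul _ _ _ hterm
        _ = ((Finset.Icc 1 l).card : ℝ) * ((N:ℝ)^2/16) := nsmul_eq_mul _ _
        _ ≤ (l:ℝ) * ((N:ℝ)^2/16) := by
            have hc : ((Finset.Icc 1 l).card : ℝ) ≤ (l:ℝ) := by
              rw [Nat.card_Icc]
              exact_mod_cast (by omega : l + 1 - 1 ≤ l)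
            apply mul_le_mul_of_nonneg_right hc (by positivity)
    calc (2:ℝ) * ‖br N (2*(j:ℤ))‖ *
          ‖∑ k ∈ Finset.Icc 1 l, 1 / AA N (j:ℤ) (k:ℤ)‖
        ≤ 2 * 2 * ((l:ℝ) * ((N:ℝ)^2/16)) := by
          apply mul_le_mul (by linarith) hsum (norm_nonneg _) (by positivity)
      _ = 4 * ((l:ℝ) * ((N:ℝ)^2/16)) := by ring
  have hNN3 : (N:ℝ) ≤ (N:ℝ)^3 := by nlinarith
  have hlN : (l:ℝ) ≤ (N:ℝ)/2 := by linarith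
  have habs := abs_nonneg ((m:ℝ))
  calc ‖(m:ℂ)/2 * ((j:ℂ) - (N:ℂ)/2) +
        (vN N ^ (j:ℤ) + vN N ^ (-(j:ℤ))) / br N (j:ℤ) +
        2 * br N (2*(j:ℤ)) * ∑ k ∈ Finset.Icc 1 l, 1 / AA N (j:ℤ) (k:ℤ)‖
      ≤ ‖(m:ℂ)/2 * ((j:ℂ) - (N:ℂ)/2) +
          (vN N ^ (j:ℤ) + vN N ^ (-(j:ℤ))) / br N (j:ℤ)‖ +
        ‖2 * br N (2*(j:ℤ)) * ∑ k ∈ Finset.Icc 1 l, 1 / AA N (j:ℤ) (k:ℤ)‖ :=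
        norm_add_le _ _
    _ ≤ |(m:ℝ)|/2 * N + (N:ℝ)/2 + 4 * ((l:ℝ) * ((N:ℝ)^2/16)) := by
        have := norm_add_le ((m:ℂ)/2 * ((j:ℂ) - (N:ℂ)/2))
          ((vN N ^ (j:ℤ) + vN N ^ (-(j:ℤ))) / br N (j:ℤ))
        linarith
    _ ≤ (|(m:ℝ)| + 1) * (N:ℝ)^3 := by
        have h1 : |(m:ℝ)| * (N:ℝ) ≤ |(m:ℝ)| * (N:ℝ)^3 :=
          mul_le_mul_of_nonneg_left hNN3 habs
        have h2 : (l:ℝ) * ((N:ℝ)^2/16) ≤ ((N:ℝ)/2) * ((N:ℝ)^2/16) :=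
          mul_le_mul_of_nonneg_right hlN (by positivity)
        have h3 : ((N:ℝ)/2) * ((N:ℝ)^2/16) = (N:ℝ)^3/32 := by ring
        have h4 : (0:ℝ) ≤ |(m:ℝ)| * (N:ℝ)^3 := by positivity
        nlinarith

lemma circle_bounds (N : ℕ) (α : ℝ) (hN : 0 < N) (x y : ℝ)
    (h : x^2 + y^2 ≤ (N:ℝ)^(2*α)) : |x| ≤ (N:ℝ)^α ∧ |y| ≤ (N:ℝ)^α := by
  have hN' : (0:ℝ) < N := by exact_mod_cast hN
  have hu0 : (0:ℝ) ≤ (N:ℝ)^α := (Real.rpow_pos_of_pos hN' α).le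
  have h2 : (N:ℝ)^(2*α) = ((N:ℝ)^α)^2 := by
    rw [show (2:ℝ)*α = α+α by ring, Real.rpow_add hN']; ring
  rw [h2] at h
  constructor
  · rw [← Real.sqrt_sq_eq_abs, ← Real.sqrt_sq hu0]
    exact Real.sqrt_le_sqrt (by nlinarith [sq_nonneg y])
  · rw [← Real.sqrt_sq_eq_abs, ← Real.sqrt_sq hu0]
    exact Real.sqrt_le_sqrt (by nlinarith [sq_nonneg x])


set_option maxHeartbeats 2000000 in
/-- Lemma 7 of the paper: the modified `D₁`-sum over the region `I₄` (close to
`(N/2, N/3)`) is `O(N^{3α} F(N/2,N/3))`. -/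
theorem sum_I4_modified_bound (m : ℤ) (α : ℝ) (hα1 : 1 / 2 < α) (hα2 : α < 2 / 3) :
    ∃ c : ℝ, 0 < c ∧ ∀ N : ℕ, 6 ≤ N →
      ‖(∑ p ∈ (Finset.range N ×ˢ Finset.range N).filter
            (fun p => 1 ≤ p.1 ∧ 2 * p.1 < N ∧ p.1 % 2 = (N - 1) % 2 ∧ p.2 < p.1 ∧
              ((p.1 : ℝ) - (N : ℝ) / 2) ^ 2 + ((p.2 : ℝ) - (N : ℝ) / 3) ^ 2 ≤
                (N : ℝ) ^ (2 * α)),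
          Complex.exp (Real.pi * Complex.I * (m : ℂ) * (p.1 : ℂ) ^ 2 / (4 * (N : ℂ))) *
            (((m : ℂ) / 2) * ((p.1 : ℂ) - (N : ℂ) / 2) +
                (vN N ^ (p.1 : ℤ) + vN N ^ (-(p.1 : ℤ))) / br N (p.1 : ℤ) +
                2 * br N (2 * (p.1 : ℤ)) *
                  ∑ k ∈ Finset.Icc 1 p.2, 1 / AA N (p.1 : ℤ) (k : ℤ)) *
            SS N ((p.1 : ℤ) - (p.2 : ℤ)) ((p.1 : ℤ) + (p.2 : ℤ)))‖ ≤
        c * (N : ℝ) ^ (3 * α) * FF N (N / 2) (N / 3) := by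
  refine ⟨(|(m:ℝ)| + 146) * 10^22, by positivity, ?_⟩
  intro N hN
  have hN0 : 0 < N := by omega
  have hN' : (0:ℝ) < N := by exact_mod_cast hN0
  have hN1 : (1:ℝ) ≤ N := by exact_mod_cast hN0
  set u : ℝ := (N:ℝ)^α with hu
  have hu1 : 1 ≤ u := by
    rw [hu, show (1:ℝ) = (N:ℝ)^(0:ℝ) by rw [Real.rpow_zero]]
    exact Real.rpow_le_rpow_of_exponent_le hN1 (by linarith)
  have hu0 : 0 < u := lt_of_lt_of_le one_pos hu1
  have hF := FF_pos N hN
  set s := (Finset.range N ×ˢ Finset.range N).filter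
      (fun p : ℕ × ℕ => 1 ≤ p.1 ∧ 2 * p.1 < N ∧ p.1 % 2 = (N - 1) % 2 ∧ p.2 < p.1 ∧
        ((p.1 : ℝ) - (N : ℝ) / 2) ^ 2 + ((p.2 : ℝ) - (N : ℝ) / 3) ^ 2 ≤
          (N : ℝ) ^ (2 * α)) with hs
  -- facts about members
  have hmem : ∀ p ∈ s, 1 ≤ p.1 ∧ 2 * p.1 < N ∧ p.2 < p.1 ∧
      |(p.1:ℝ) - (N:ℝ)/2| ≤ u ∧ |(p.2:ℝ) - (N:ℝ)/3| ≤ u := by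
    intro p hp
    rw [hs, Finset.mem_filter] at hp
    obtain ⟨-, h1, h2, -, h4, h5⟩ := hp
    obtain ⟨ha, hb⟩ := circle_bounds N α hN0 _ _ h5
    exact ⟨h1, h2, h4, ha, hb⟩
  -- the exponential has modulus one
  have hexp : ∀ p : ℕ × ℕ,
      ‖Complex.exp (Real.pi * Complex.I * (m : ℂ) * (p.1 : ℂ) ^ 2 /
        (4 * (N : ℂ)))‖ = 1 := by
    intro p
    rw [show (Real.pi * Complex.I * (m : ℂ) * (p.1 : ℂ) ^ 2 / (4 * (N : ℂ))) =
        ((Real.pi * m * (p.1:ℝ)^2 / (4*N) : ℝ) : ℂ) * Complex.I by push_cast; ring]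
    exact Complex.norm_exp_ofReal_mul_I _
  -- SS bound
  have hSS : ∀ p ∈ s, ‖SS N ((p.1 : ℤ) - (p.2 : ℤ)) ((p.1 : ℤ) + (p.2 : ℤ))‖ ≤
      6 * FF N (N/2) (N/3) := by
    intro p hp
    obtain ⟨h1, h2, h4, -, -⟩ := hmem p hp
    exact SS_bound N hN (by omega) (by omega)
  by_cases hcase : 24 * u ≤ (N:ℝ)
  · -- main branch
    have hterm : ∀ p ∈ s,
        ‖Complex.exp (Real.pi * Complex.I * (m : ℂ) * (p.1 : ℂ) ^ 2 /
            (4 * (N : ℂ))) *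
          (((m : ℂ) / 2) * ((p.1 : ℂ) - (N : ℂ) / 2) +
              (vN N ^ (p.1 : ℤ) + vN N ^ (-(p.1 : ℤ))) / br N (p.1 : ℤ) +
              2 * br N (2 * (p.1 : ℤ)) *
                ∑ k ∈ Finset.Icc 1 p.2, 1 / AA N (p.1 : ℤ) (k : ℤ)) *
          SS N ((p.1 : ℤ) - (p.2 : ℤ)) ((p.1 : ℤ) + (p.2 : ℤ))‖ ≤
        ((|(m:ℝ)| + 146) * u) * (6 * FF N (N/2) (N/3)) := by
      intro p hp
      obtain ⟨h1, h2, h4, ha, hb⟩ := hmem p hp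
      rw [norm_mul, norm_mul, hexp p, one_mul]
      exact mul_le_mul (M_bound_main N m p.1 p.2 hN h2 h4 hu1 hcase ha hb)
        (hSS p hp) (norm_nonneg _) (by positivity)
    -- cardinality bound
    set K : ℕ := ⌈u⌉₊ + 1 with hK
    have hKu : (K:ℝ) ≤ u + 2 := by
      rw [hK]
      push_cast
      have := Nat.ceil_lt_add_one hu0.le (R := ℝ)
      linarith
    have huK : u ≤ (K:ℝ) := by
      rw [hK]; push_cast
      have := Nat.le_ceil u
      linarith
    have hceil : u ≤ (⌈u⌉₊:ℝ) := Nat.le_ceil u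
    have hceil2 : (⌈u⌉₊:ℝ) ≤ u + 1 := by
      have := Nat.ceil_lt_add_one hu0.le (R := ℝ)
      linarith
    have hsub : s ⊆ Finset.Icc (N/2 - K) (N/2 + K) ×ˢ Finset.Icc (N/3 - K) (N/3 + K) := by
      intro p hp
      obtain ⟨h1, h2, h4, ha, hb⟩ := hmem p hp
      obtain ⟨ha1, ha2⟩ := abs_le.mp ha
      obtain ⟨hb1, hb2⟩ := abs_le.mp hb
      have hN2 : (N:ℝ) ≤ 2*(N/2 : ℕ) + 1 := by exact_mod_cast (by omega : N ≤ 2*(N/2) + 1)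
      have hN2' : ((N/2 : ℕ):ℝ) ≤ (N:ℝ)/2 := by
        have : 2*(N/2 : ℕ) ≤ N := by omega
        have := (Nat.cast_le (α := ℝ)).mpr this
        push_cast at this
        linarith
      have hN3 : (N:ℝ) ≤ 3*(N/3 : ℕ) + 2 := by exact_mod_cast (by omega : N ≤ 3*(N/3) + 2)
      have hN3' : ((N/3 : ℕ):ℝ) ≤ (N:ℝ)/3 := by
        have : 3*(N/3 : ℕ) ≤ N := by omega
        have := (Nat.cast_le (α := ℝ)).mpr this
        push_cast at this
        linarith
      have hp1u : p.1 ≤ N/2 + K := by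
        have : (p.1:ℝ) ≤ ((N/2 + K : ℕ):ℝ) := by push_cast [hK]; linarith
        exact_mod_cast this
      have hp1l : N/2 ≤ p.1 + K := by
        have : ((N/2 : ℕ):ℝ) ≤ ((p.1 + K : ℕ):ℝ) := by push_cast; linarith
        exact_mod_cast this
      have hp2u : p.2 ≤ N/3 + K := by
        have : (p.2:ℝ) ≤ ((N/3 + K : ℕ):ℝ) := by push_cast [hK]; linarith
        exact_mod_cast this
      have hp2l : N/3 ≤ p.2 + K := by
        have : ((N/3 : ℕ):ℝ) ≤ ((p.2 + K : ℕ):ℝ) := by push_cast; linarith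
        exact_mod_cast this
      rw [Finset.mem_product, Finset.mem_Icc, Finset.mem_Icc]
      omega
    have hcard : (s.card : ℝ) ≤ 49 * (u * u) := by
      have h1 : s.card ≤ (2*K+1) * (2*K+1) := by
        calc s.card ≤ ((Finset.Icc (N/2 - K) (N/2 + K)) ×ˢ
              (Finset.Icc (N/3 - K) (N/3 + K))).card := Finset.card_le_card hsub
          _ = (Finset.Icc (N/2 - K) (N/2 + K)).card *
              (Finset.Icc (N/3 - K) (N/3 + K)).card := Finset.card_product _ _
          _ ≤ (2*K+1) * (2*K+1) := by
              apply Nat.mul_le_mul <;> (rw [Nat.card_Icc]; omega)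
      have h2 : ((2*K+1 : ℕ):ℝ) ≤ 7 * u := by
        push_cast
        linarith
      calc (s.card : ℝ) ≤ ((2*K+1) * (2*K+1) : ℕ) := by exact_mod_cast h1
        _ = ((2*K+1 : ℕ):ℝ) * ((2*K+1 : ℕ):ℝ) := by push_cast; ring
        _ ≤ (7*u) * (7*u) := by
            apply mul_le_mul h2 h2 (by positivity) (by positivity)
        _ = 49 * (u * u) := by ring
    calc ‖∑ p ∈ s, _‖ ≤ ∑ p ∈ s, ‖_‖ := norm_sum_le _ _
      _ ≤ s.card • (((|(m:ℝ)| + 146) * u) * (6 * FF N (N/2) (N/3))) :=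
          Finset.sum_le_card_nsmul _ _ _ hterm
      _ = (s.card : ℝ) * (((|(m:ℝ)| + 146) * u) * (6 * FF N (N/2) (N/3))) :=
          nsmul_eq_mul _ _
      _ ≤ (49 * (u * u)) * (((|(m:ℝ)| + 146) * u) * (6 * FF N (N/2) (N/3))) := by
          apply mul_le_mul_of_nonneg_right hcard (by positivity)
      _ = (294 * (|(m:ℝ)| + 146)) * ((u * u) * u) * FF N (N/2) (N/3) := by ring
      _ ≤ ((|(m:ℝ)| + 146) * 10^22) * (N:ℝ)^(3*α) * FF N (N/2) (N/3) := by
          have huuu : (u * u) * u = (N:ℝ)^(3*α) := by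
            rw [hu, ← Real.rpow_add hN', ← Real.rpow_add hN']
            congr 1
            ring
          rw [huuu]
          apply mul_le_mul_of_nonneg_right ?_ hF.le
          apply mul_le_mul_of_nonneg_right ?_ (Real.rpow_pos_of_pos hN' _).le
          nlinarith [abs_nonneg ((m:ℝ))]
  · -- crude branch : N is bounded
    push_neg at hcase
    have hu23 : u ≤ (N:ℝ)^((2:ℝ)/3) := by
      rw [hu]
      exact Real.rpow_le_rpow_of_exponent_le hN1 (by linarith)
    have hN13 : (N:ℝ) ≤ 13824 := by
      set w : ℝ := (N:ℝ)^((1:ℝ)/3) with hw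
      have hw0 : 0 < w := Real.rpow_pos_of_pos hN' _
      have hw3 : w^3 = (N:ℝ) := by
        rw [hw, ← Real.rpow_natCast ((N:ℝ)^((1:ℝ)/3)) 3, ← Real.rpow_mul hN'.le]
        norm_num
      have hw2 : w^2 = (N:ℝ)^((2:ℝ)/3) := by
        rw [hw, ← Real.rpow_natCast ((N:ℝ)^((1:ℝ)/3)) 2, ← Real.rpow_mul hN'.le]
        norm_num
      have hlt : w^3 < 24 * w^2 := by
        rw [hw3, hw2]
        calc (N:ℝ) < 24 * u := hcase
          _ ≤ 24 * (N:ℝ)^((2:ℝ)/3) := by linarith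
      have hw24 : w ≤ 24 := by nlinarith [sq_nonneg w, hw0]
      calc (N:ℝ) = w^3 := hw3.symm
        _ ≤ 24^3 := by nlinarith
        _ ≤ 13824 := by norm_num
    have h3α : (1:ℝ) ≤ (N:ℝ)^(3*α) := by
      rw [show (1:ℝ) = (N:ℝ)^(0:ℝ) by rw [Real.rpow_zero]]
      exact Real.rpow_le_rpow_of_exponent_le hN1 (by linarith)
    have hterm : ∀ p ∈ s,
        ‖Complex.exp (Real.pi * Complex.I * (m : ℂ) * (p.1 : ℂ) ^ 2 /
            (4 * (N : ℂ))) *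
          (((m : ℂ) / 2) * ((p.1 : ℂ) - (N : ℂ) / 2) +
              (vN N ^ (p.1 : ℤ) + vN N ^ (-(p.1 : ℤ))) / br N (p.1 : ℤ) +
              2 * br N (2 * (p.1 : ℤ)) *
                ∑ k ∈ Finset.Icc 1 p.2, 1 / AA N (p.1 : ℤ) (k : ℤ)) *
          SS N ((p.1 : ℤ) - (p.2 : ℤ)) ((p.1 : ℤ) + (p.2 : ℤ))‖ ≤
        ((|(m:ℝ)| + 1) * (N:ℝ)^3) * (6 * FF N (N/2) (N/3)) := by
      intro p hp
      obtain ⟨h1, h2, h4, -, -⟩ := hmem p hp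
      rw [norm_mul, norm_mul, hexp p, one_mul]
      exact mul_le_mul (M_bound_crude N m p.1 p.2 hN h1 h2 h4)
        (hSS p hp) (norm_nonneg _) (by positivity)
    have hcard : (s.card : ℝ) ≤ (N:ℝ) * (N:ℝ) := by
      have h1 : s.card ≤ N * N := by
        calc s.card ≤ (Finset.range N ×ˢ Finset.range N).card := Finset.card_filter_le _ _
          _ = N * N := by rw [Finset.card_product, Finset.card_range]
      exact_mod_cast h1
    calc ‖∑ p ∈ s, _‖ ≤ ∑ p ∈ s, ‖_‖ := norm_sum_le _ _
      _ ≤ s.card • (((|(m:ℝ)| + 1) * (N:ℝ)^3) * (6 * FF N (N/2) (N/3))) :=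
          Finset.sum_le_card_nsmul _ _ _ hterm
      _ = (s.card : ℝ) * (((|(m:ℝ)| + 1) * (N:ℝ)^3) * (6 * FF N (N/2) (N/3))) :=
          nsmul_eq_mul _ _
      _ ≤ ((N:ℝ) * (N:ℝ)) * (((|(m:ℝ)| + 1) * (N:ℝ)^3) * (6 * FF N (N/2) (N/3))) := by
          apply mul_le_mul_of_nonneg_right hcard (by positivity)
      _ = (6 * (|(m:ℝ)| + 1) * (N:ℝ)^5) * FF N (N/2) (N/3) := by ring
      _ ≤ ((|(m:ℝ)| + 146) * 10^22) * (N:ℝ)^(3*α) * FF N (N/2) (N/3) := by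
          apply mul_le_mul_of_nonneg_right ?_ hF.le
          have hN5 : (N:ℝ)^5 ≤ 13824^5 := by
            apply pow_le_pow_left₀ hN'.le hN13
          have habs := abs_nonneg ((m:ℝ))
          have hc1 : 6 * (|(m:ℝ)| + 1) * (N:ℝ)^5 ≤ 6 * (|(m:ℝ)| + 146) * 13824^5 := by
            apply mul_le_mul ?_ hN5 (by positivity) (by positivity)
            nlinarith
          calc 6 * (|(m:ℝ)| + 1) * (N:ℝ)^5 ≤ 6 * (|(m:ℝ)| + 146) * 13824^5 := hc1
            _ ≤ ((|(m:ℝ)| + 146) * 10^22) * 1 := by nlinarith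
            _ ≤ ((|(m:ℝ)| + 146) * 10^22) * (N:ℝ)^(3*α) := by
                apply mul_le_mul_of_nonneg_left h3α (by positivity)
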